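/- Let Ω be a finite set of non-zero complex numbers that splits into at most 2 equivalence classes under the relation α ∼ β iff α/β is a root of unity. Then there are infinitely many trinomials X^m + A·X^n + B (m > n > 0, B ≠ 0) that vanish at every element of Ω. -/
import Mathlib


open Polynomial
open scoped Classical

/-- A complex number is a root of unity. -/
def IsRootOfUnity (z : ℂ) : Prop := ∃ N : ℕ, 0 < N ∧ z ^ N = 1

/-- If a finite set `Ω` of non-zero complex numbers splits into at most 2 equivalence
classes (no three pairwise inequivalent elements), then infinitely many trinomials vanish at
every element of `Ω`. -/
theorem infinitely_many_trinomials_of_le_two_classes (Ω : Finset ℂ)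
    (h0 : ∀ ω ∈ Ω, ω ≠ 0)
    (h2 : ∀ α ∈ Ω, ∀ β ∈ Ω, ∀ γ ∈ Ω,
      IsRootOfUnity (α / β) ∨ IsRootOfUnity (α / γ) ∨ IsRootOfUnity (β / γ)) :
    ({p : Polynomial ℂ | ∃ m n : ℕ, ∃ A B : ℂ, n < m ∧ 0 < n ∧ B ≠ 0 ∧
          p = X ^ m + Polynomial.C A * X ^ n + Polynomial.C B ∧ ∀ ω ∈ Ω, p.eval ω = 0}).Infinite := by
  -- Step 1: find two nonzero "representatives" covering Ω.
  obtain ⟨α, β, hα, hβ, hcov⟩ : ∃ α β : ℂ, α ≠ 0 ∧ β ≠ 0 ∧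
      ∀ ω ∈ Ω, IsRootOfUnity (ω / α) ∨ IsRootOfUnity (ω / β) := by
    by_cases hne : Ω.Nonempty
    · obtain ⟨α, hαΩ⟩ := hne
      by_cases hall : ∀ ω ∈ Ω, IsRootOfUnity (ω / α)
      · exact ⟨α, α, h0 α hαΩ, h0 α hαΩ, fun ω hω => Or.inl (hall ω hω)⟩
      · push_neg at hall
        obtain ⟨β, hβΩ, hβn⟩ := hall
        refine ⟨α, β, h0 α hαΩ, h0 β hβΩ, fun ω hω => ?_⟩
        rcases h2 ω hω α hαΩ β hβΩ with h | h | h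
        · exact Or.inl h
        · exact Or.inr h
        · exfalso; apply hβn
          obtain ⟨M, hM, hMe⟩ := h
          exact ⟨M, hM, by rw [← inv_div, inv_pow, hMe, inv_one]⟩
    · exact ⟨1, 1, one_ne_zero, one_ne_zero, fun ω hω => absurd ⟨ω, hω⟩ hne⟩
  -- Step 2: a common exponent.
  have hcov' : ∀ ω ∈ Ω, ∃ M : ℕ, 0 < M ∧ ((ω / α) ^ M = 1 ∨ (ω / β) ^ M = 1) := by
    intro ω hω
    rcases hcov ω hω with ⟨M, hM, he⟩ | ⟨M, hM, he⟩
    exacts [⟨M, hM, Or.inl he⟩, ⟨M, hM, Or.inr he⟩]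
  choose! f hf0 hfe using hcov'
  set N : ℕ := ∏ ω ∈ Ω, f ω with hNdef
  have hN : 0 < N := Finset.prod_pos fun ω hω => hf0 ω hω
  set a : ℂ := α ^ N
  set b : ℂ := β ^ N
  have ha : a ≠ 0 := pow_ne_zero _ hα
  have hb : b ≠ 0 := pow_ne_zero _ hβ
  have hab : ∀ ω ∈ Ω, ω ^ N = a ∨ ω ^ N = b := by
    intro ω hω
    obtain ⟨c, hc⟩ := Finset.dvd_prod_of_mem f hω
    rcases hfe ω hω with he | he
    · left
      have h1 : (ω / α) ^ N = 1 := by rw [hNdef, hc, pow_mul, he, one_pow]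
      rw [div_pow] at h1
      exact (div_eq_one_iff_eq (pow_ne_zero _ hα)).mp h1
    · right
      have h1 : (ω / β) ^ N = 1 := by rw [hNdef, hc, pow_mul, he, one_pow]
      rw [div_pow] at h1
      exact (div_eq_one_iff_eq (pow_ne_zero _ hβ)).mp h1
  -- Step 3: the infinite family.
  apply Set.infinite_of_injective_forall_mem
    (f := fun k : ℕ =>
      (X ^ (N * (k + 1)) - C (a ^ (k + 1))) * (X ^ (N * (k + 1)) - C (b ^ (k + 1))))
  · -- injectivity via natDegree
    have hdeg : ∀ k : ℕ, ((X ^ (N * (k + 1)) - C (a ^ (k + 1))) *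
        (X ^ (N * (k + 1)) - C (b ^ (k + 1))) : ℂ[X]).natDegree = N * (k + 1) + N * (k + 1) := by
      intro k
      have hp : 0 < N * (k + 1) := Nat.mul_pos hN (Nat.succ_pos k)
      rw [(monic_X_pow_sub_C _ hp.ne').natDegree_mul (monic_X_pow_sub_C _ hp.ne'),
        natDegree_X_pow_sub_C, natDegree_X_pow_sub_C]
    intro k l h
    have h' := congrArg natDegree h
    rw [hdeg k, hdeg l] at h'
    have h'' : N * (k + 1) = N * (l + 1) := by omega
    have := Nat.eq_of_mul_eq_mul_left hN h''
    omega
  · intro k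
    set K := k + 1 with hK
    have hp : 0 < N * K := Nat.mul_pos hN k.succ_pos
    refine ⟨N * K + N * K, N * K, -(a ^ K + b ^ K), a ^ K * b ^ K,
      lt_add_of_pos_left _ hp, hp, mul_ne_zero (pow_ne_zero _ ha) (pow_ne_zero _ hb), ?_, ?_⟩
    · rw [pow_add]
      simp only [C_mul, C_add, C_neg]
      ring
    · intro ω hω
      have hpow : ω ^ (N * K) = (ω ^ N) ^ K := by rw [pow_mul]
      rcases hab ω hω with h | h <;>
        simp [hpow, h]
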